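/- Let A ⊆ ℝ^d and h ∈ 𝒟. If P_0^h(A) = 0, then there exists g ∈ 𝒟 with g ≺ h such that P_0^g(A) = 0. -/

import Mathlib

open Set Metric Filter Topology
open scoped ENNReal

/-- `h` is a dimension function: continuous and nondecreasing on `(0,∞)`, positive
there, and tending to `0` as `t → 0⁺`. -/
def IsDimFun (h : ℝ → ℝ) : Prop :=
  ContinuousOn h (Ioi 0) ∧ MonotoneOn h (Ioi 0) ∧ (∀ t, 0 < t → 0 < h t) ∧
    Tendsto h (𝓝[>] (0:ℝ)) (𝓝 0)

/-- `g ≺ h` : `g` is a smaller dimension than `h`, i.e. `lim_{t→0⁺} h(t)/g(t) = 0`. -/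
def DimLT (g h : ℝ → ℝ) : Prop :=
  Tendsto (fun t => h t / g t) (𝓝[>] (0:ℝ)) (𝓝 0)

/-- `h ∈ 𝒟_d`: `h` is a doubling, at most `d`-dimensional dimension function. -/
def IsDimFunD (d : ℕ) (h : ℝ → ℝ) : Prop :=
  IsDimFun h ∧ (∃ c₀ > (0:ℝ), ∀ t > (0:ℝ), t ^ d ≤ c₀ * h t) ∧
    ∃ c₁ > (0:ℝ), ∀ t > (0:ℝ), h (2 * t) ≤ c₁ * h t

/-- `P_δ^h(E)`: supremum of `∑ h(|Bᵢ|)` over countable `δ`-packings of `E`, where a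
`δ`-packing is a countable collection of pairwise disjoint open balls centered at
points of `E` with diameters (`= 2r`) less than `δ`. -/
noncomputable def packingPre (d : ℕ) (h : ℝ → ℝ) (δ : ℝ)
    (E : Set (EuclideanSpace ℝ (Fin d))) : ℝ≥0∞ :=
  ⨆ (c : ℕ → EuclideanSpace ℝ (Fin d)) (r : ℕ → ℝ) (s : Set ℕ)
    (_ : ∀ i ∈ s, c i ∈ E) (_ : ∀ i ∈ s, 0 < r i) (_ : ∀ i ∈ s, 2 * r i < δ)
    (_ : s.PairwiseDisjoint fun i => ball (c i) (r i)),
    ∑' i : s, ENNReal.ofReal (h (2 * r (i : ℕ)))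

/-- The packing premeasure `P_0^h(E) = inf_{δ>0} P_δ^h(E)`. -/
noncomputable def packingPre0 (d : ℕ) (h : ℝ → ℝ)
    (E : Set (EuclideanSpace ℝ (Fin d))) : ℝ≥0∞ :=
  ⨅ (δ : ℝ) (_ : 0 < δ), packingPre d h δ E

/-- The packing measure `𝒫^h(E)`. -/
noncomputable def packingMeasure (d : ℕ) (h : ℝ → ℝ)
    (E : Set (EuclideanSpace ℝ (Fin d))) : ℝ≥0∞ :=
  ⨅ (F : ℕ → Set (EuclideanSpace ℝ (Fin d))) (_ : E ⊆ ⋃ j, F j),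
    ∑' j, packingPre0 d h (F j)

/-- `E` has non-σ-finite `𝒫^h` measure: `E` is not a countable union of sets of
finite `𝒫^h` measure. -/
def NonSigmaFinitePacking (d : ℕ) (h : ℝ → ℝ)
    (E : Set (EuclideanSpace ℝ (Fin d))) : Prop :=
  ¬ ∃ F : ℕ → Set (EuclideanSpace ℝ (Fin d)),
      E ⊆ ⋃ j, F j ∧ ∀ j, packingMeasure d h (F j) < ⊤

/-- `A ⊆ ℝ^d` is analytic: a continuous image of `ℕ^ℕ`. -/
def IsAnalyticSet' (d : ℕ) (A : Set (EuclideanSpace ℝ (Fin d))) : Prop :=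
  ∃ φ : (ℕ → ℕ) → EuclideanSpace ℝ (Fin d), Continuous φ ∧ A = Set.range φ

section Aux

variable {d : ℕ}

lemma le_packingPre (h : ℝ → ℝ) (δ : ℝ) (E : Set (EuclideanSpace ℝ (Fin d)))
    (c : ℕ → EuclideanSpace ℝ (Fin d)) (r : ℕ → ℝ) (s : Set ℕ)
    (h1 : ∀ i ∈ s, c i ∈ E) (h2 : ∀ i ∈ s, 0 < r i) (h3 : ∀ i ∈ s, 2 * r i < δ)
    (h4 : s.PairwiseDisjoint fun i => ball (c i) (r i)) :
    ∑' i : s, ENNReal.ofReal (h (2 * r (i : ℕ))) ≤ packingPre d h δ E := by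
  unfold packingPre
  exact le_iSup_of_le c <| le_iSup_of_le r <| le_iSup_of_le s <| le_iSup_of_le h1 <|
    le_iSup_of_le h2 <| le_iSup_of_le h3 <| le_iSup_of_le h4 le_rfl

lemma packingPre_le (h : ℝ → ℝ) (δ : ℝ) (E : Set (EuclideanSpace ℝ (Fin d)))
    (M : ℝ≥0∞)
    (H : ∀ (c : ℕ → EuclideanSpace ℝ (Fin d)) (r : ℕ → ℝ) (s : Set ℕ),
      (∀ i ∈ s, c i ∈ E) → (∀ i ∈ s, 0 < r i) → (∀ i ∈ s, 2 * r i < δ) →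
      (s.PairwiseDisjoint fun i => ball (c i) (r i)) →
      ∑' i : s, ENNReal.ofReal (h (2 * r (i : ℕ))) ≤ M) :
    packingPre d h δ E ≤ M := by
  unfold packingPre
  exact iSup_le fun c => iSup_le fun r => iSup_le fun s => iSup_le fun h1 =>
    iSup_le fun h2 => iSup_le fun h3 => iSup_le fun h4 => H c r s h1 h2 h3 h4

lemma packingPre_mono (h : ℝ → ℝ) {δ δ' : ℝ} (hd : δ' ≤ δ)
    (E : Set (EuclideanSpace ℝ (Fin d))) :
    packingPre d h δ' E ≤ packingPre d h δ E := by
  refine packingPre_le h δ' E _ fun c r s h1 h2 h3 h4 => ?_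
  exact le_packingPre h δ E c r s h1 h2 (fun i hi => (h3 i hi).trans_le hd) h4

lemma exists_packingPre_le (h : ℝ → ℝ) (E : Set (EuclideanSpace ℝ (Fin d)))
    (hE : packingPre0 d h E = 0) {ε : ℝ≥0∞} (hε : 0 < ε) :
    ∃ δ : ℝ, 0 < δ ∧ packingPre d h δ E ≤ ε := by
  by_contra hc
  push_neg at hc
  have : ε ≤ packingPre0 d h E :=
    le_iInf fun δ => le_iInf fun hδ => (hc δ hδ).le
  rw [hE] at this
  exact absurd (le_antisymm this zero_le) hε.ne'

end Aux
/-- Theorem 4(a) of the paper. -/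
theorem prepacking_zero_down (d : ℕ) (h : ℝ → ℝ) (hh : IsDimFun h)
    (A : Set (EuclideanSpace ℝ (Fin d))) (hA : packingPre0 d h A = 0) :
    ∃ g : ℝ → ℝ, IsDimFun g ∧ DimLT g h ∧ packingPre0 d g A = 0 := by
  classical
  obtain ⟨hcont, hmono, hpos, htend⟩ := hh
  -- Step lemma: we can always shrink the scale.
  have step : ∀ a : ℝ, 0 < a → ∀ ε : ℝ≥0∞, 0 < ε →
      ∃ b : ℝ, 0 < b ∧ b ≤ a / 2 ∧ h b ≤ h a / 4 ∧ packingPre d h b A ≤ ε := by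
    intro a ha ε hε
    obtain ⟨δ₁, hδ₁, hP⟩ := exists_packingPre_le h A hA hε
    have h4 : (0:ℝ) < h a / 4 := by have := hpos a ha; linarith
    have hev : ∀ᶠ t in 𝓝[>] (0:ℝ), h t < h a / 4 := htend.eventually_lt_const h4
    obtain ⟨η, hη, hsub⟩ := mem_nhdsGT_iff_exists_Ioc_subset.1 hev
    have hη0 : (0:ℝ) < η := hη
    refine ⟨min (a/2) (min δ₁ η / 2), ?_, min_le_left _ _, ?_, ?_⟩
    · apply lt_min (by linarith)
      have : (0:ℝ) < min δ₁ η := lt_min hδ₁ hη0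
      linarith
    · have hb1 : min (a/2) (min δ₁ η / 2) ≤ η := by
        have h1 : min δ₁ η / 2 ≤ η := by
          have := min_le_right δ₁ η; linarith
        exact (min_le_right _ _).trans h1
      have hbpos : (0:ℝ) < min (a/2) (min δ₁ η / 2) := by
        apply lt_min (by linarith)
        have : (0:ℝ) < min δ₁ η := lt_min hδ₁ hη0
        linarith
      exact (hsub ⟨hbpos, hb1⟩).le
    · refine (packingPre_mono h ?_ A).trans hP
      have h1 : min δ₁ η / 2 ≤ δ₁ := by
        have := min_le_left δ₁ η
        have := lt_min hδ₁ hη0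
        linarith
      exact (min_le_right _ _).trans h1
  choose! next hn1 hn2 hn3 hn4 using step
  have hεpos : ∀ m : ℕ, (0:ℝ≥0∞) < 2⁻¹ ^ m :=
    fun m => ENNReal.pow_pos (by norm_num) m
  -- the sequence of scales
  set δδ : ℕ → ℝ := fun k => Nat.rec (next 1 1) (fun k a => next a (2⁻¹ ^ (3*(k+1)))) k
    with hδδdef
  have hδδs : ∀ k, δδ (k+1) = next (δδ k) (2⁻¹ ^ (3*(k+1))) := fun k => rfl
  have hδpos : ∀ k, 0 < δδ k := by
    intro k; induction k with
    | zero => exact hn1 1 one_pos 1 one_pos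
    | succ k ih => rw [hδδs]; exact hn1 _ ih _ (hεpos _)
  have hhalf : ∀ k, δδ (k+1) ≤ δδ k / 2 := by
    intro k; rw [hδδs]; exact hn2 _ (hδpos k) _ (hεpos _)
  have hquarter : ∀ k, h (δδ (k+1)) ≤ h (δδ k) / 4 := by
    intro k; rw [hδδs]; exact hn3 _ (hδpos k) _ (hεpos _)
  have hδP : ∀ k, packingPre d h (δδ k) A ≤ 2⁻¹ ^ (3*k) := by
    intro k; cases k with
    | zero => exact (hn4 1 one_pos 1 one_pos).trans_eq (by simp)
    | succ k => rw [hδδs]; exact hn4 _ (hδpos k) _ (hεpos _)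
  have hanti : StrictAnti δδ :=
    strictAnti_nat_of_succ_lt fun k => (hhalf k).trans_lt (by linarith [hδpos k])
  have hδδle : ∀ k, δδ k ≤ δδ 0 * (2⁻¹:ℝ)^k := by
    intro k; induction k with
    | zero => simp
    | succ k ih =>
      calc δδ (k+1) ≤ δδ k / 2 := hhalf k
        _ ≤ (δδ 0 * 2⁻¹^k)/2 := by linarith
        _ = δδ 0 * 2⁻¹^(k+1) := by ring
  have hex : ∀ t : ℝ, 0 < t → ∃ n, δδ n < t := by
    intro t ht
    obtain ⟨n, hn⟩ := exists_pow_lt_of_lt_one (div_pos ht (hδpos 0))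
      (by norm_num : (2⁻¹:ℝ) < 1)
    refine ⟨n, (hδδle n).trans_lt ?_⟩
    calc δδ 0 * 2⁻¹^n < δδ 0 * (t / δδ 0) := by
          exact mul_lt_mul_of_pos_left hn (hδpos 0)
      _ = t := by rw [mul_comm]; exact div_mul_cancel₀ t (hδpos 0).ne'
  have find_k : ∀ (M:ℕ) (t:ℝ), 0 < t → t ≤ δδ M →
      ∃ k, M ≤ k ∧ δδ (k+1) ≤ t ∧ t ≤ δδ k := by
    intro M t ht hM
    have hexn := hex t ht
    have hlt : δδ (Nat.find hexn) < t := Nat.find_spec hexn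
    have hnM : M < Nat.find hexn := by
      by_contra hcon; push_neg at hcon
      exact absurd hlt (not_lt.2 (hM.trans (hanti.antitone hcon)))
    refine ⟨Nat.find hexn - 1, by omega, ?_, ?_⟩
    · have he : Nat.find hexn - 1 + 1 = Nat.find hexn := by omega
      rw [he]; exact hlt.le
    · exact not_lt.1 (Nat.find_min hexn (by omega))
  -- the auxiliary quantities u and the functions f, g
  set u : ℕ → ℝ := fun k => 2^(k+1) * h (δδ k) with hudef
  have hu_eq : ∀ k, u k = 2^(k+1) * h (δδ k) := fun k => rfl
  have hupos : ∀ k, 0 < u k :=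
    fun k => mul_pos (pow_pos two_pos _) (hpos _ (hδpos k))
  have hu : ∀ k, u (k+1) ≤ u k / 2 := by
    intro k
    have h1 := hquarter k
    have h2 : (0:ℝ) < 2^(k+2) := pow_pos two_pos _
    calc u (k+1) = 2^(k+2) * h (δδ (k+1)) := hu_eq (k+1)
      _ ≤ 2^(k+2) * (h (δδ k)/4) := mul_le_mul_of_nonneg_left h1 h2.le
      _ = (2^(k+1) * h (δδ k))/2 := by ring
      _ = u k / 2 := (hu_eq k ▸ rfl)
  have huanti : Antitone u :=
    antitone_nat_of_succ_le fun k => (hu k).trans (by linarith [hupos k])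
  have hule : ∀ k, u k ≤ u 0 * (2⁻¹:ℝ)^k := by
    intro k; induction k with
    | zero => simp
    | succ k ih =>
      calc u (k+1) ≤ u k / 2 := hu k
        _ ≤ (u 0 * 2⁻¹^k)/2 := by linarith
        _ = u 0 * 2⁻¹^(k+1) := by ring
  set f : ℕ → ℝ → ℝ := fun k t => min (2^(k+1) * h t) (2^k * h (δδ k)) with hfdef
  have hf_eq : ∀ k t, f k t = min (2^(k+1) * h t) (2^k * h (δδ k)) := fun k t => rfl
  have hf1 : ∀ k t, f k t ≤ 2^(k+1) * h t := fun k t => min_le_left _ _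
  have hf2 : ∀ k t, f k t ≤ 2^k * h (δδ k) := fun k t => min_le_right _ _
  have hf3 : ∀ k t (a : ℝ), a ≤ 2^(k+1) * h t → a ≤ 2^k * h (δδ k) → a ≤ f k t :=
    fun k t a h1 h2 => le_min h1 h2
  have hcap : ∀ k, 2^k * h (δδ k) = u k / 2 := by
    intro k; rw [hu_eq k]; ring
  have hfle : ∀ k t, f k t ≤ h (δδ 0) := by
    intro k t
    calc f k t ≤ 2^k * h (δδ k) := hf2 k t
      _ = u k / 2 := hcap k
      _ ≤ u 0 / 2 := by linarith [huanti (Nat.zero_le k)]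
      _ = h (δδ 0) := by rw [hu_eq 0]; ring
  have hbdd : ∀ t : ℝ, BddAbove (Set.range fun k => f k t) :=
    fun t => ⟨h (δδ 0), by rintro x ⟨k, rfl⟩; exact hfle k t⟩
  set g : ℝ → ℝ := fun t => ⨆ k, f k t with hgdef
  have hfg : ∀ k t, f k t ≤ g t := fun k t => le_ciSup (hbdd t) k
  have g_le : ∀ (t : ℝ) (M : ℝ), (∀ j, f j t ≤ M) → g t ≤ M :=
    fun t M hM => ciSup_le hM
  -- the sup is attained on each dyadic-like interval
  have key : ∀ k t, δδ (k+1) ≤ t → t ≤ δδ k → ∀ j, f j t ≤ f k t := by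
    intro k t h1 h2 j
    have ht : 0 < t := lt_of_lt_of_le (hδpos (k+1)) h1
    have hht := hpos t ht
    rcases lt_trichotomy j k with hj | rfl | hj
    · refine hf3 k t _ ?_ ?_
      · calc f j t ≤ 2^(j+1) * h t := hf1 j t
          _ ≤ 2^(k+1) * h t :=
            mul_le_mul_of_nonneg_right (pow_le_pow_right₀ one_le_two (by omega)) hht.le
      · calc f j t ≤ 2^(j+1) * h t := hf1 j t
          _ ≤ 2^k * h t :=
            mul_le_mul_of_nonneg_right (pow_le_pow_right₀ one_le_two (by omega)) hht.le
          _ ≤ 2^k * h (δδ k) :=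
            mul_le_mul_of_nonneg_left
              (hmono (Set.mem_Ioi.2 ht) (Set.mem_Ioi.2 (hδpos k)) h2)
              (by positivity)
    · exact le_rfl
    · have hj1 : k+1 ≤ j := hj
      have e1 : f j t ≤ u (k+1) / 2 := by
        calc f j t ≤ 2^j * h (δδ j) := hf2 j t
          _ = u j / 2 := hcap j
          _ ≤ u (k+1)/2 := by linarith [huanti hj1]
      refine hf3 k t _ ?_ ?_
      · calc f j t ≤ u (k+1)/2 := e1
          _ = 2^(k+1) * h (δδ (k+1)) := by rw [hu_eq (k+1)]; ring
          _ ≤ 2^(k+1) * h t :=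
            mul_le_mul_of_nonneg_left
              (hmono (Set.mem_Ioi.2 (hδpos (k+1))) (Set.mem_Ioi.2 ht) h1)
              (by positivity)
      · calc f j t ≤ u (k+1)/2 := e1
          _ ≤ u k / 4 := by linarith [hu k]
          _ ≤ 2^k * h (δδ k) := by
            rw [hu_eq k]
            have hk := hpos (δδ k) (hδpos k)
            have h2k : (0:ℝ) < 2^k := pow_pos two_pos k
            rw [pow_succ]
            nlinarith
  have g_eq : ∀ k t, δδ (k+1) ≤ t → t ≤ δδ k → g t = f k t :=
    fun k t h1 h2 => le_antisymm (g_le t _ (key k t h1 h2)) (hfg k t)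
  have key0 : ∀ t, δδ 0 ≤ t → ∀ j, f j t ≤ f 0 t := by
    intro t h1 j
    have ht : 0 < t := lt_of_lt_of_le (hδpos 0) h1
    have e2 : h (δδ 0) ≤ f 0 t := by
      refine hf3 0 t _ ?_ ?_
      · have hm := hmono (Set.mem_Ioi.2 (hδpos 0)) (Set.mem_Ioi.2 ht) h1
        have h0 := hpos (δδ 0) (hδpos 0)
        have : (2:ℝ)^(0+1) = 2 := by norm_num
        nlinarith
      · norm_num
    calc f j t ≤ 2^j * h (δδ j) := hf2 j t
      _ = u j / 2 := hcap j
      _ ≤ u 0 / 2 := by linarith [huanti (Nat.zero_le j)]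
      _ = h (δδ 0) := by rw [hu_eq 0]; ring
      _ ≤ f 0 t := e2
  have g_eq0 : ∀ t, δδ 0 ≤ t → g t = f 0 t :=
    fun t h1 => le_antisymm (g_le t _ (key0 t h1)) (hfg 0 t)
  -- basic properties of g
  have hgpos : ∀ t, 0 < t → 0 < g t := by
    intro t ht
    have h1 : 0 < f 0 t := by
      rw [hf_eq]
      have := hpos t ht
      have := hpos (δδ 0) (hδpos 0)
      apply lt_min (by positivity) (by positivity)
    exact h1.trans_le (hfg 0 t)
  have hgmono : MonotoneOn g (Ioi 0) := by
    intro a ha b hb hab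
    refine g_le a _ fun k => le_trans ?_ (hfg k b)
    rw [hf_eq, hf_eq]
    exact min_le_min
      (mul_le_mul_of_nonneg_left (hmono ha hb hab) (by positivity)) le_rfl
  have hfcont : ∀ k, ContinuousOn (f k) (Ioi 0) := by
    intro k
    simp only [hfdef]
    exact (continuousOn_const.mul hcont).inf continuousOn_const
  have hgcont : ContinuousOn g (Ioi 0) := by
    intro t ht
    apply ContinuousAt.continuousWithinAt
    have ht0 : (0:ℝ) < t := ht
    obtain ⟨n, hn⟩ := hex t ht0
    have hPex : ∃ m, δδ (m+1) < t := ⟨n, (hanti (Nat.lt_succ_self n)).trans hn⟩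
    rcases Nat.eq_zero_or_pos (Nat.find hPex) with h0 | hpos'
    · have h1t : δδ 1 < t := by
        have := Nat.find_spec hPex; rw [h0] at this; simpa using this
      have hU : ContinuousOn g (Ioi (δδ 1)) := by
        refine ContinuousOn.congr ((hfcont 0).mono ?_) ?_
        · exact fun x hx => lt_trans (hδpos 1) hx
        · intro x hx
          rcases le_total x (δδ 0) with hc | hc
          · exact g_eq 0 x (le_of_lt hx) hc
          · exact g_eq0 x hc
      exact hU.continuousAt (Ioi_mem_nhds h1t)
    · obtain ⟨m, hm⟩ : ∃ m, Nat.find hPex = m + 1 :=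
        ⟨Nat.find hPex - 1, by omega⟩
      have hm2 : δδ (m+2) < t := by
        have := Nat.find_spec hPex; rw [hm] at this; exact this
      have hm1 : t ≤ δδ (m+1) := by
        have := Nat.find_min hPex (show m < Nat.find hPex by omega)
        exact not_lt.1 this
      have htm : t < δδ m := lt_of_le_of_lt hm1 (hanti (Nat.lt_succ_self m))
      have hsubU : Ioo (δδ (m+2)) (δδ m) ⊆ Ioi (0:ℝ) :=
        fun x hx => lt_trans (hδpos (m+2)) hx.1
      have hU : ContinuousOn g (Ioo (δδ (m+2)) (δδ m)) := by
        refine ContinuousOn.congr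
          (((hfcont m).mono hsubU).sup ((hfcont (m+1)).mono hsubU)) ?_
        intro x hx
        rcases le_total x (δδ (m+1)) with hc | hc
        · have hgx : g x = f (m+1) x := g_eq (m+1) x hx.1.le hc
          have hle : f m x ≤ f (m+1) x := by rw [← hgx]; exact hfg m x
          rw [hgx]; exact (max_eq_right hle).symm
        · have hgx : g x = f m x := g_eq m x hc hx.2.le
          have hle : f (m+1) x ≤ f m x := by rw [← hgx]; exact hfg (m+1) x
          rw [hgx]; exact (max_eq_left hle).symm
      exact hU.continuousAt (Ioo_mem_nhds hm2 htm)
  have hgub : ∀ k t, δδ (k+1) ≤ t → t ≤ δδ k → g t ≤ h (δδ 0) * (2⁻¹:ℝ)^k := by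
    intro k t h1 h2
    rw [g_eq k t h1 h2]
    calc f k t ≤ 2^k * h (δδ k) := hf2 k t
      _ = u k / 2 := hcap k
      _ ≤ (u 0 * 2⁻¹^k)/2 := by linarith [hule k]
      _ = h (δδ 0) * 2⁻¹^k := by rw [hu_eq 0]; ring
  have hgtend : Tendsto g (𝓝[>] (0:ℝ)) (𝓝 0) := by
    rw [Metric.tendsto_nhdsWithin_nhds]
    intro ε hε
    have hδδ0pos := hpos (δδ 0) (hδpos 0)
    obtain ⟨M, hM⟩ := exists_pow_lt_of_lt_one (div_pos hε hδδ0pos)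
      (by norm_num : (2⁻¹:ℝ) < 1)
    refine ⟨δδ M, hδpos M, ?_⟩
    intro x hx hdist
    rw [Real.dist_eq, sub_zero] at hdist ⊢
    have hx0 : 0 < x := hx
    have hxM : x ≤ δδ M := ((le_abs_self x).trans_lt hdist).le
    obtain ⟨k, hkM, hk1, hk2⟩ := find_k M x hx0 hxM
    have hb := hgub k x hk1 hk2
    have h2 : (2⁻¹:ℝ)^k ≤ 2⁻¹^M :=
      pow_le_pow_of_le_one (by norm_num) (by norm_num) hkM
    rw [abs_of_pos (hgpos x hx0)]
    calc g x ≤ h (δδ 0) * 2⁻¹^k := hb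
      _ ≤ h (δδ 0) * 2⁻¹^M := mul_le_mul_of_nonneg_left h2 hδδ0pos.le
      _ < ε := by rw [mul_comm]; exact (lt_div_iff₀ hδδ0pos).1 hM
  have hglb : ∀ k t, δδ (k+1) ≤ t → t ≤ δδ k → 2^k * h t ≤ g t := by
    intro k t h1 h2
    rw [g_eq k t h1 h2]
    have ht : 0 < t := lt_of_lt_of_le (hδpos (k+1)) h1
    refine hf3 k t _ ?_ ?_
    · have := hpos t ht
      have hpw : (2:ℝ)^k ≤ 2^(k+1) := pow_le_pow_right₀ one_le_two (Nat.le_succ k)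
      nlinarith
    · exact mul_le_mul_of_nonneg_left
        (hmono (Set.mem_Ioi.2 ht) (Set.mem_Ioi.2 (hδpos k)) h2) (by positivity)
  have hdim : Tendsto (fun t => h t / g t) (𝓝[>] (0:ℝ)) (𝓝 0) := by
    rw [Metric.tendsto_nhdsWithin_nhds]
    intro ε hε
    obtain ⟨M, hM⟩ := exists_pow_lt_of_lt_one hε (by norm_num : (2⁻¹:ℝ) < 1)
    refine ⟨δδ M, hδpos M, ?_⟩
    intro x hx hdist
    rw [Real.dist_eq, sub_zero] at hdist ⊢
    have hx0 : 0 < x := hx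
    have hxM : x ≤ δδ M := ((le_abs_self x).trans_lt hdist).le
    obtain ⟨k, hkM, hk1, hk2⟩ := find_k M x hx0 hxM
    have hhx := hpos x hx0
    have hgx := hgpos x hx0
    have hlow := hglb k x hk1 hk2
    have hdiv : h x / g x ≤ (2⁻¹:ℝ)^k := by
      rw [div_le_iff₀ hgx]
      have hpk : (0:ℝ) < (2⁻¹:ℝ)^k := by positivity
      calc h x = 2⁻¹^k * (2^k * h x) := by
            rw [← mul_assoc, ← mul_pow]; norm_num
        _ ≤ 2⁻¹^k * g x := mul_le_mul_of_nonneg_left hlow hpk.le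
    rw [abs_of_pos (div_pos hhx hgx)]
    calc h x / g x ≤ 2⁻¹^k := hdiv
      _ ≤ 2⁻¹^M := pow_le_pow_of_le_one (by norm_num) (by norm_num) hkM
      _ < ε := hM
  -- the packing estimate for g
  have hcancel : ∀ n : ℕ, (2:ℝ≥0∞)^n * 2⁻¹^n = 1 := fun n => by
    rw [← mul_pow, ENNReal.mul_inv_cancel two_ne_zero ENNReal.ofNat_ne_top, one_pow]
  have hpack : ∀ K : ℕ, packingPre d g (δδ (K+1)) A ≤ 16 * (2⁻¹:ℝ≥0∞)^K := by
    intro K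
    refine packingPre_le g (δδ (K+1)) A _ fun c r s hc hr hlt hdisj => ?_
    have hex2 : ∀ i : ℕ, i ∈ s → ∃ n, δδ n < 2 * r i := by
      intro i hi; exact hex _ (by have := hr i hi; linarith)
    set J : ℕ → ℕ := fun i =>
      if hx : ∃ n, δδ n < 2 * r i then Nat.find hx - 1 else 0 with hJdef
    have hJ : ∀ i ∈ s, δδ (J i + 1) ≤ 2 * r i ∧ 2 * r i ≤ δδ (J i) ∧ K + 1 ≤ J i := by
      intro i hi
      have hx := hex2 i hi
      have hJi : J i = Nat.find hx - 1 := by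
        simp only [hJdef]; rw [dif_pos hx]
      have hfind : δδ (Nat.find hx) < 2 * r i := Nat.find_spec hx
      have hge : K + 2 ≤ Nat.find hx := by
        by_contra hcon
        push_neg at hcon
        have h1 : δδ (K+1) ≤ δδ (Nat.find hx) := hanti.antitone (show Nat.find hx ≤ K+1 by omega)
        have h2 := hlt i hi
        linarith
      have hplus : J i + 1 = Nat.find hx := by omega
      refine ⟨?_, ?_, by omega⟩
      · rw [hplus]; exact hfind.le
      · have := Nat.find_min hx (show J i < Nat.find hx by omega)
        exact not_lt.1 this
    have hjb : ∀ j : ℕ,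
        (∑' i : s, if j = J i then ENNReal.ofReal (g (2 * r (i:ℕ))) else 0)
          ≤ 8 * (2⁻¹:ℝ≥0∞)^K * 2⁻¹^j := by
      intro j
      rcases lt_or_ge j (K+1) with hjK | hjK
      · have hzero : ∀ i : s,
            (if j = J i then ENNReal.ofReal (g (2 * r (i:ℕ))) else 0) = 0 := by
          intro i
          rw [if_neg]
          intro hji
          have := (hJ i i.2).2.2
          omega
        rw [tsum_congr hzero]
        simp
      · obtain ⟨m, rfl⟩ : ∃ m, j = m + 1 := ⟨j - 1, by omega⟩
        have hmK : K ≤ m := by omega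
        have hstep1 : ∀ i : s,
            (if m+1 = J i then ENNReal.ofReal (g (2 * r (i:ℕ))) else 0)
              ≤ (2:ℝ≥0∞)^(m+2) *
                (if m+1 = J i then ENNReal.ofReal (h (2 * r (i:ℕ))) else 0) := by
          intro i
          by_cases hji : m+1 = J (i:ℕ)
          · rw [if_pos hji, if_pos hji]
            obtain ⟨e1, e2, e3⟩ := hJ i i.2
            rw [← hji] at e1 e2
            have hgi : g (2 * r (i:ℕ)) = f (m+1) (2 * r (i:ℕ)) := g_eq (m+1) _ e1 e2
            have hle2 : g (2 * r (i:ℕ)) ≤ 2^(m+2) * h (2 * r (i:ℕ)) := by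
              rw [hgi]; exact hf1 (m+1) _
            calc ENNReal.ofReal (g (2 * r (i:ℕ)))
                ≤ ENNReal.ofReal ((2:ℝ)^(m+2) * h (2 * r (i:ℕ))) :=
                  ENNReal.ofReal_le_ofReal hle2
              _ = ENNReal.ofReal ((2:ℝ)^(m+2)) * ENNReal.ofReal (h (2 * r (i:ℕ))) :=
                  ENNReal.ofReal_mul (by positivity)
              _ = (2:ℝ≥0∞)^(m+2) * ENNReal.ofReal (h (2 * r (i:ℕ))) := by
                  rw [ENNReal.ofReal_pow (by norm_num)]
                  norm_num
          · rw [if_neg hji, if_neg hji, mul_zero]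
        set s' : Set ℕ := {i | i ∈ s ∧ J i = m+1} with hs'def
        have hsum_eq : (∑' i : s, if m+1 = J (i:ℕ) then ENNReal.ofReal (h (2 * r (i:ℕ))) else 0)
            = ∑' i : s', ENNReal.ofReal (h (2 * r (i:ℕ))) := by
          rw [tsum_subtype s (fun i => if m+1 = J i then ENNReal.ofReal (h (2 * r i)) else 0),
            tsum_subtype s' (fun i => ENNReal.ofReal (h (2 * r i)))]
          apply tsum_congr
          intro i
          simp only [Set.indicator_apply, hs'def, Set.mem_setOf_eq]
          by_cases h1 : i ∈ s
          · by_cases h2 : J i = m + 1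
            · rw [if_pos h1, if_pos h2.symm, if_pos ⟨h1, h2⟩]
            · rw [if_pos h1, if_neg (fun hh => h2 hh.symm),
                if_neg (fun hh : i ∈ s ∧ J i = m + 1 => h2 hh.2)]
          · rw [if_neg h1, if_neg (fun hh : i ∈ s ∧ J i = m + 1 => h1 hh.1)]
        have hsub' : (∑' i : s', ENNReal.ofReal (h (2 * r (i:ℕ))))
            ≤ packingPre d h (δδ m) A := by
          apply le_packingPre h (δδ m) A c r s'
          · exact fun i hi => hc i hi.1
          · exact fun i hi => hr i hi.1
          · intro i hi
            have e2 := (hJ i hi.1).2.1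
            rw [hi.2] at e2
            exact lt_of_le_of_lt e2 (hanti (Nat.lt_succ_self m))
          · exact hdisj.subset fun i hi => hi.1
        have hP' : packingPre d h (δδ m) A ≤ 2⁻¹^(3*m) := hδP m
        have halg : (2:ℝ≥0∞)^(m+2) * 2⁻¹^(3*m) ≤ 8 * (2⁻¹:ℝ≥0∞)^K * 2⁻¹^(m+1) := by
          have hpow : (2⁻¹:ℝ≥0∞)^m ≤ 2⁻¹^K :=
            pow_le_pow_of_le_one zero_le (by norm_num) hmK
          have e1 : (2:ℝ≥0∞)^(m+2) * 2⁻¹^(3*m)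
              = ((2:ℝ≥0∞)^m * 2⁻¹^m) * (4 * (2⁻¹^m * 2⁻¹^m)) := by ring
          have e2 : (8:ℝ≥0∞) * 2⁻¹^K * 2⁻¹^(m+1)
              = ((2:ℝ≥0∞) * 2⁻¹) * (4 * 2⁻¹^K * 2⁻¹^m) := by ring
          rw [e1, hcancel m, one_mul, e2,
            ENNReal.mul_inv_cancel two_ne_zero ENNReal.ofNat_ne_top, one_mul]
          calc (4:ℝ≥0∞) * (2⁻¹^m * 2⁻¹^m) = 4 * 2⁻¹^m * 2⁻¹^m := by ring
            _ ≤ 4 * 2⁻¹^K * 2⁻¹^m := mul_le_mul_left (mul_le_mul_right hpow 4) _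
        calc (∑' i : s, if m+1 = J (i:ℕ) then ENNReal.ofReal (g (2 * r (i:ℕ))) else 0)
            ≤ ∑' i : s, (2:ℝ≥0∞)^(m+2) *
                (if m+1 = J (i:ℕ) then ENNReal.ofReal (h (2 * r (i:ℕ))) else 0) :=
              ENNReal.tsum_le_tsum hstep1
          _ = (2:ℝ≥0∞)^(m+2) * ∑' i : s,
                (if m+1 = J (i:ℕ) then ENNReal.ofReal (h (2 * r (i:ℕ))) else 0) :=
              ENNReal.tsum_mul_left
          _ ≤ (2:ℝ≥0∞)^(m+2) * 2⁻¹^(3*m) := by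
              rw [hsum_eq]
              exact mul_le_mul_right (hsub'.trans hP') _
          _ ≤ 8 * (2⁻¹:ℝ≥0∞)^K * 2⁻¹^(m+1) := halg
    calc (∑' i : s, ENNReal.ofReal (g (2 * r (i:ℕ))))
        = ∑' i : s, ∑' j : ℕ, (if j = J (i:ℕ) then ENNReal.ofReal (g (2 * r (i:ℕ))) else 0) := by
          refine tsum_congr fun i => ?_
          exact (tsum_ite_eq (J (i:ℕ)) (fun _ => ENNReal.ofReal (g (2 * r (i:ℕ))))).symm
      _ = ∑' j : ℕ, ∑' i : s, (if j = J (i:ℕ) then ENNReal.ofReal (g (2 * r (i:ℕ))) else 0) :=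
          ENNReal.tsum_comm
      _ ≤ ∑' j : ℕ, 8 * (2⁻¹:ℝ≥0∞)^K * 2⁻¹^j := ENNReal.tsum_le_tsum hjb
      _ = 8 * (2⁻¹:ℝ≥0∞)^K * ∑' j : ℕ, 2⁻¹^j := ENNReal.tsum_mul_left
      _ = 16 * (2⁻¹:ℝ≥0∞)^K := by
          rw [ENNReal.tsum_geometric, ENNReal.one_sub_inv_two, inv_inv]
          ring
  -- conclusion
  have hP0 : packingPre0 d g A = 0 := by
    refine le_antisymm ?_ zero_le
    have hle : ∀ K : ℕ, packingPre0 d g A ≤ 16 * (2⁻¹:ℝ≥0∞)^K := by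
      intro K
      refine le_trans ?_ (hpack K)
      exact iInf_le_of_le (δδ (K+1)) (iInf_le_of_le (hδpos (K+1)) le_rfl)
    have htt : Tendsto (fun K : ℕ => 16 * (2⁻¹:ℝ≥0∞)^K) atTop (𝓝 0) := by
      have h0 : Tendsto (fun K : ℕ => (2⁻¹:ℝ≥0∞)^K) atTop (𝓝 0) :=
        ENNReal.tendsto_pow_atTop_nhds_zero_of_lt_one
          (by simpa using ENNReal.inv_lt_one.2 one_lt_two)
      have := ENNReal.Tendsto.const_mul h0 (Or.inr (by norm_num : (16:ℝ≥0∞) ≠ ⊤))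
      simpa using this
    exact ge_of_tendsto htt (Filter.Eventually.of_forall hle)
  exact ⟨g, ⟨hgcont, hgmono, hgpos, hgtend⟩, hdim, hP0⟩
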